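/- arXiv:2010.08511 — 4 statements merged into one kernel-verified Lean document; each statement's English description precedes it below -/
import Mathlib

section
/- Characterization of the logarithmic growth condition (Lemma 3.1): Let L > 0 and let f : [0, L] → ℝ be continuous with f(0) = 0. For δ > 0 set M_δ := max_{s ∈ [0,L]} f(s)/(s+δ) (note M_δ ≥ 0 since f(0) = 0). Then limsup_{s→0⁺} f(s)/(s (ln s)²) < ∞ holds if and only if there exists k > 0 such that δ^k e^{√(M_δ)} → 0 as δ → 0⁺. -/
set_option maxHeartbeats 1000000


open Set Filter
open scoped Topology

noncomputable section

lemma my_sqrt_add (x y : ℝ) (hx : 0 ≤ x) (hy : 0 ≤ y) :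
    Real.sqrt (x + y) ≤ Real.sqrt x + Real.sqrt y := by
  have h1 := Real.sqrt_nonneg x
  have h2 := Real.sqrt_nonneg y
  have h : x + y ≤ (Real.sqrt x + Real.sqrt y) ^ 2 := by
    nlinarith [Real.sq_sqrt hx, Real.sq_sqrt hy, mul_nonneg h1 h2]
  calc Real.sqrt (x + y) ≤ Real.sqrt ((Real.sqrt x + Real.sqrt y) ^ 2) := Real.sqrt_le_sqrt h
    _ = |Real.sqrt x + Real.sqrt y| := Real.sqrt_sq_eq_abs _
    _ = Real.sqrt x + Real.sqrt y := abs_of_nonneg (by linarith)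

lemma my_t_log_sq (t : ℝ) (ht : 0 < t) (ht1 : t ≤ 1) : t * Real.log t ^ 2 ≤ 4 := by
  set u := t⁻¹ with hu
  have hupos : 0 < u := inv_pos.mpr ht
  have hu1 : 1 ≤ u := one_le_inv_iff₀.mpr ⟨ht, ht1⟩
  have hlog : Real.log t ^ 2 = Real.log u ^ 2 := by
    rw [hu, Real.log_inv]; ring
  have hsq : Real.log u ≤ 2 * Real.sqrt u := by
    have h1 : Real.log (Real.sqrt u) ≤ Real.sqrt u - 1 :=
      Real.log_le_sub_one_of_pos (Real.sqrt_pos.mpr hupos)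
    have h2 : Real.log (Real.sqrt u) = Real.log u / 2 := Real.log_sqrt hupos.le
    have h3 := Real.sqrt_nonneg u
    linarith
  have hlognn : 0 ≤ Real.log u := Real.log_nonneg hu1
  have h4 : Real.log u ^ 2 ≤ 4 * u := by
    nlinarith [Real.sq_sqrt hupos.le, Real.sqrt_nonneg u]
  have htu : t * u = 1 := mul_inv_cancel₀ ht.ne'
  calc t * Real.log t ^ 2 = t * Real.log u ^ 2 := by rw [hlog]
    _ ≤ t * (4 * u) := mul_le_mul_of_nonneg_left h4 ht.le
    _ = 4 * (t * u) := by ring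
    _ = 4 := by rw [htu]; ring

/-- Characterization of the logarithmic growth condition (Lemma 3.1):
`limsup_{s→0⁺} f(s)/(s (ln s)²) < ∞` iff there is `k > 0` with
`δ^k e^{√(M_δ)} → 0` as `δ → 0⁺`, where `M_δ = max_{s∈[0,L]} f(s)/(s+δ)`. -/
theorem log_growth_characterization (L : ℝ) (hL : 0 < L) (f : ℝ → ℝ)
    (hf : ContinuousOn f (Icc 0 L)) (hf0 : f 0 = 0) :
    (∃ C : ℝ, ∀ᶠ s in 𝓝[>] (0 : ℝ), f s / (s * (Real.log s) ^ 2) ≤ C) ↔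
      ∃ k : ℝ, 0 < k ∧
        Tendsto (fun δ : ℝ =>
            δ ^ k * Real.exp (Real.sqrt (sSup ((fun s => f s / (s + δ)) '' Icc 0 L))))
          (𝓝[>] (0 : ℝ)) (𝓝 0) := by
  have h0mem : (0:ℝ) ∈ Icc (0:ℝ) L := ⟨le_refl 0, hL.le⟩
  constructor
  · rintro ⟨C, hC⟩
    set C₀ := max C 0 with hC₀def
    have hC₀ : 0 ≤ C₀ := le_max_right _ _
    obtain ⟨u, hu, hsub⟩ := mem_nhdsGT_iff_exists_Ioo_subset.mp hC
    set ε := min u (min L 1) with hεdef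
    have hε : 0 < ε := lt_min hu (lt_min hL one_pos)
    have hε1 : ε ≤ 1 := le_trans (min_le_right _ _) (min_le_right _ _)
    have hεL : ε ≤ L := le_trans (min_le_right _ _) (min_le_left _ _)
    have hεu : ε ≤ u := min_le_left _ _
    -- pointwise bound near 0
    have key : ∀ s ∈ Ioo (0:ℝ) ε, f s ≤ C₀ * (s * Real.log s ^ 2) := by
      intro s hs
      have hs0 : 0 < s := hs.1
      have hs1 : s < 1 := lt_of_lt_of_le hs.2 hε1
      have hlneg : Real.log s < 0 := Real.log_neg hs0 hs1
      have hne : Real.log s ≠ 0 := ne_of_lt hlneg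
      have hlsq : 0 < Real.log s ^ 2 := (sq_nonneg _).lt_of_ne (Ne.symm (pow_ne_zero 2 hne))
      have hden : 0 < s * Real.log s ^ 2 := mul_pos hs0 hlsq
      have h1 : f s / (s * Real.log s ^ 2) ≤ C := hsub ⟨hs0, lt_of_lt_of_le hs.2 hεu⟩
      have h2 : f s ≤ C * (s * Real.log s ^ 2) := (div_le_iff₀ hden).mp h1
      have h3 : C ≤ C₀ := le_max_left _ _
      nlinarith [hden.le]
    have hBdd : BddAbove (f '' Icc 0 L) := (isCompact_Icc.image_of_continuousOn hf).bddAbove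
    set B := sSup (f '' Icc 0 L) with hBdef
    have hfB : ∀ s ∈ Icc (0:ℝ) L, f s ≤ B := fun s hs => le_csSup hBdd ⟨s, hs, rfl⟩
    have hB0 : 0 ≤ B := by have := hfB 0 h0mem; rw [hf0] at this; exact this
    set D := 8 * C₀ + B / ε with hDdef
    have hD0 : 0 ≤ D := by positivity
    set k := Real.sqrt (2 * C₀) + 1 with hkdef
    have hk0 : 0 < k := by positivity
    refine ⟨k, hk0, ?_⟩
    have hub : ∀ᶠ δ in 𝓝[>] (0:ℝ),
        δ ^ k * Real.exp (Real.sqrt (sSup ((fun s => f s / (s + δ)) '' Icc 0 L)))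
          ≤ Real.exp (Real.sqrt D) * δ := by
      filter_upwards [Ioo_mem_nhdsGT_of_mem (show (0:ℝ) ∈ Ico (0:ℝ) ε from ⟨le_refl _, hε⟩)]
        with δ hδ
      have hδ0 : 0 < δ := hδ.1
      have hδ1 : δ < 1 := lt_of_lt_of_le hδ.2 hε1
      have hlδ : Real.log δ < 0 := Real.log_neg hδ0 hδ1
      -- bound the sup
      have hMle : sSup ((fun s => f s / (s + δ)) '' Icc 0 L)
          ≤ 2 * C₀ * Real.log δ ^ 2 + D := by
        apply csSup_le ((nonempty_Icc.mpr hL.le).image _)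
        rintro x ⟨s, hs, rfl⟩
        have hs0 : 0 ≤ s := hs.1
        have hsd : 0 < s + δ := by linarith
        have hRnn : 0 ≤ 2 * C₀ * Real.log δ ^ 2 + D := by positivity
        by_cases hsε : s < ε
        · rcases eq_or_lt_of_le hs0 with h0 | hspos
          · simp only [← h0, hf0, zero_div]; exact hRnn
          · have hkey := key s ⟨hspos, hsε⟩
            by_cases hsδ : s ≤ δ
            · -- small s : s ≤ δ
              have ht := my_t_log_sq (s / δ) (by positivity) ((div_le_one hδ0).mpr hsδ)
              have hls : Real.log s = Real.log δ + Real.log (s / δ) := by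
                rw [← Real.log_mul hδ0.ne' (by positivity : (s / δ) ≠ 0)]
                congr 1
                field_simp
              have hsx : s * Real.log (s / δ) ^ 2 ≤ 4 * δ := by
                have h5 : δ * (s / δ * Real.log (s / δ) ^ 2) = s * Real.log (s / δ) ^ 2 := by
                  field_simp
                have h6 := mul_le_mul_of_nonneg_left ht hδ0.le
                linarith
              have hslog : s * Real.log s ^ 2 ≤ 2 * δ * Real.log δ ^ 2 + 8 * δ := by
                have h7 : s * Real.log s ^ 2
                    ≤ 2 * s * Real.log δ ^ 2 + 2 * (s * Real.log (s / δ) ^ 2) := by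
                  rw [hls]
                  nlinarith [sq_nonneg (Real.log δ - Real.log (s / δ)), hspos.le]
                nlinarith [sq_nonneg (Real.log δ)]
              have hnum : f s ≤ (2 * C₀ * Real.log δ ^ 2 + 8 * C₀) * (s + δ) := by
                have h8 : f s ≤ C₀ * (2 * δ * Real.log δ ^ 2 + 8 * δ) := by
                  nlinarith
                have h9 : (2 * C₀ * Real.log δ ^ 2 + 8 * C₀) * δ
                    ≤ (2 * C₀ * Real.log δ ^ 2 + 8 * C₀) * (s + δ) := by
                  apply mul_le_mul_of_nonneg_left (by linarith) (by positivity)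
                nlinarith
              have := (div_le_iff₀ hsd).mpr hnum
              have hBε : 0 ≤ B / ε := by positivity
              calc f s / (s + δ) ≤ 2 * C₀ * Real.log δ ^ 2 + 8 * C₀ := this
                _ ≤ 2 * C₀ * Real.log δ ^ 2 + D := by rw [hDdef]; linarith
            · -- δ < s < ε
              push_neg at hsδ
              have hs1 : s < 1 := lt_of_lt_of_le hsε hε1
              have hlsneg : Real.log s < 0 := Real.log_neg hspos hs1
              have hll : Real.log δ ≤ Real.log s := Real.log_le_log hδ0 hsδ.le
              have hsq : Real.log s ^ 2 ≤ Real.log δ ^ 2 := by nlinarith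
              have hnum : f s ≤ (2 * C₀ * Real.log δ ^ 2 + D) * (s + δ) := by
                have h8 : f s ≤ C₀ * Real.log δ ^ 2 * s := by
                  nlinarith [mul_le_mul_of_nonneg_left hsq (mul_nonneg hC₀ hspos.le)]
                nlinarith [mul_pos hspos hδ0, sq_nonneg (Real.log δ)]
              exact (div_le_iff₀ hsd).mpr hnum
        · -- ε ≤ s
          push_neg at hsε
          by_cases hfs : f s ≤ 0
          · exact le_trans (div_nonpos_iff.mpr (Or.inr ⟨hfs, hsd.le⟩)) hRnn
          · push_neg at hfs
            have h10 : f s / (s + δ) ≤ B / ε :=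
              div_le_div₀ hB0 (hfB s hs) hε (by linarith)
            calc f s / (s + δ) ≤ B / ε := h10
              _ ≤ 2 * C₀ * Real.log δ ^ 2 + D := by
                  rw [hDdef]; nlinarith [sq_nonneg (Real.log δ)]
      -- sqrt bound
      have hsqrtB : Real.sqrt (sSup ((fun s => f s / (s + δ)) '' Icc 0 L))
          ≤ Real.sqrt D + -(Real.log δ * Real.sqrt (2 * C₀)) := by
        have h11 : Real.sqrt (sSup ((fun s => f s / (s + δ)) '' Icc 0 L))
            ≤ Real.sqrt (2 * C₀ * Real.log δ ^ 2 + D) := Real.sqrt_le_sqrt hMle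
        have h12 : Real.sqrt (2 * C₀ * Real.log δ ^ 2 + D)
            ≤ Real.sqrt (2 * C₀ * Real.log δ ^ 2) + Real.sqrt D :=
          my_sqrt_add _ _ (by positivity) hD0
        have h13 : Real.sqrt (2 * C₀ * Real.log δ ^ 2)
            = Real.sqrt (2 * C₀) * (-(Real.log δ)) := by
          rw [Real.sqrt_mul (by positivity : (0:ℝ) ≤ 2 * C₀), Real.sqrt_sq_eq_abs,
            abs_of_neg hlδ]
        have h14 : Real.sqrt (2 * C₀ * Real.log δ ^ 2) + Real.sqrt D
            = Real.sqrt D + -(Real.log δ * Real.sqrt (2 * C₀)) := by rw [h13]; ring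
        linarith
      have hexp : Real.exp (Real.sqrt (sSup ((fun s => f s / (s + δ)) '' Icc 0 L)))
          ≤ Real.exp (Real.sqrt D) * Real.exp (-(Real.log δ * Real.sqrt (2 * C₀))) := by
        rw [← Real.exp_add]
        exact Real.exp_le_exp.mpr hsqrtB
      have hφ : δ ^ k = Real.exp (Real.log δ * Real.sqrt (2 * C₀)) * δ := by
        rw [hkdef, Real.rpow_add hδ0, Real.rpow_one, Real.rpow_def_of_pos hδ0]
      calc δ ^ k * Real.exp (Real.sqrt (sSup ((fun s => f s / (s + δ)) '' Icc 0 L)))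
          ≤ δ ^ k * (Real.exp (Real.sqrt D) * Real.exp (-(Real.log δ * Real.sqrt (2 * C₀)))) :=
            mul_le_mul_of_nonneg_left hexp (Real.rpow_nonneg hδ0.le _)
        _ = Real.exp (Real.sqrt D) * δ *
            (Real.exp (Real.log δ * Real.sqrt (2 * C₀)) *
              Real.exp (-(Real.log δ * Real.sqrt (2 * C₀)))) := by rw [hφ]; ring
        _ = Real.exp (Real.sqrt D) * δ := by
            rw [← Real.exp_add, add_neg_cancel, Real.exp_zero, mul_one]
    have hlb : ∀ᶠ δ in 𝓝[>] (0:ℝ),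
        0 ≤ δ ^ k * Real.exp (Real.sqrt (sSup ((fun s => f s / (s + δ)) '' Icc 0 L))) := by
      filter_upwards [self_mem_nhdsWithin] with δ hδ
      have : (0:ℝ) < δ := hδ
      positivity
    have htend : Tendsto (fun δ : ℝ => Real.exp (Real.sqrt D) * δ) (𝓝[>] (0:ℝ)) (𝓝 0) := by
      have h := (tendsto_id.const_mul (Real.exp (Real.sqrt D))).mono_left
        (nhdsWithin_le_nhds : 𝓝[>] (0:ℝ) ≤ 𝓝 0)
      simpa using h
    exact squeeze_zero' hlb hub htend
  · rintro ⟨k, hk, hten⟩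
    refine ⟨2 * k ^ 2, ?_⟩
    have h1 := hten.eventually_lt_const one_pos
    filter_upwards [h1, Ioo_mem_nhdsGT_of_mem
      (show (0:ℝ) ∈ Ico (0:ℝ) (min L 1) from ⟨le_refl _, lt_min hL one_pos⟩)] with s hs1 hs2
    have hs0 : 0 < s := hs2.1
    have hsL : s ≤ L := le_of_lt (lt_of_lt_of_le hs2.2 (min_le_left _ _))
    have hslt1 : s < 1 := lt_of_lt_of_le hs2.2 (min_le_right _ _)
    have hlneg : Real.log s < 0 := Real.log_neg hs0 hslt1
    have hcont : ContinuousOn (fun t => f t / (t + s)) (Icc 0 L) := by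
      apply hf.div (continuousOn_id.add continuousOn_const)
      intro t ht
      have : 0 ≤ t := ht.1
      exact (add_pos_of_nonneg_of_pos this hs0).ne'
    have hBdd : BddAbove ((fun t => f t / (t + s)) '' Icc 0 L) :=
      (isCompact_Icc.image_of_continuousOn hcont).bddAbove
    set M := sSup ((fun t => f t / (t + s)) '' Icc 0 L) with hM
    have hM0 : 0 ≤ M := by
      have hmem0 : (0:ℝ) ∈ (fun t => f t / (t + s)) '' Icc 0 L :=
        ⟨0, h0mem, by simp [hf0]⟩
      exact le_csSup hBdd hmem0
    have hmem : f s / (s + s) ≤ M := le_csSup hBdd ⟨s, ⟨hs0.le, hsL⟩, rfl⟩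
    have hrpos : 0 < s ^ k := Real.rpow_pos_of_pos hs0 k
    have hexp : Real.exp (Real.sqrt M) ≤ (s ^ k)⁻¹ := by
      rw [← one_div]
      refine (le_div_iff₀ hrpos).mpr ?_
      rw [mul_comm]
      exact le_of_lt hs1
    have hsqrt : Real.sqrt M ≤ -(k * Real.log s) := by
      calc Real.sqrt M = Real.log (Real.exp (Real.sqrt M)) := (Real.log_exp _).symm
        _ ≤ Real.log ((s ^ k)⁻¹) := Real.log_le_log (Real.exp_pos _) hexp
        _ = -(k * Real.log s) := by rw [Real.log_inv, Real.log_rpow hs0]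
    have hM_le : M ≤ k ^ 2 * Real.log s ^ 2 := by
      nlinarith [Real.sq_sqrt hM0, Real.sqrt_nonneg M]
    have h2s : 0 < s + s := by linarith
    have hfs : f s ≤ 2 * k ^ 2 * (s * Real.log s ^ 2) := by
      have h3 := (div_le_iff₀ h2s).mp (hmem.trans hM_le)
      nlinarith
    have hne : Real.log s ≠ 0 := ne_of_lt hlneg
    have hden : 0 < s * Real.log s ^ 2 :=
      mul_pos hs0 ((sq_nonneg _).lt_of_ne (Ne.symm (pow_ne_zero 2 hne)))
    exact (div_le_iff₀ hden).mpr hfs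
end
end

section
/- Quantitative bound for the maximum of f(s)/(s+δ) under a logarithmic growth bound (key estimate in the proof of Lemma 3.1): Let L > 0 and C > 0, and let f : [0, L] → ℝ satisfy f(0) = 0 and f(s) ≤ C s (ln s)² for all s ∈ (0, L]. Then for every δ ∈ (0, e^{−2}), sup_{s ∈ [0,L]} f(s)/(s+δ) ≤ C (|ln δ| + |ln L|)². -/
open Set

noncomputable section

private lemma slog_mono : ∀ s t : ℝ, 0 < s → s ≤ t → t ≤ Real.exp (-2) →
    s * (Real.log s) ^ 2 ≤ t * (Real.log t) ^ 2 := by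
  have key : MonotoneOn (fun x : ℝ => x * (Real.log x) ^ 2) (Ioc 0 (Real.exp (-2))) := by
    apply monotoneOn_of_deriv_nonneg (convex_Ioc _ _)
    · exact continuousOn_id.mul ((Real.continuousOn_log.mono (by
        intro x hx; exact ne_of_gt hx.1)).pow 2)
    · rw [interior_Ioc]
      intro x hx
      exact (differentiableAt_id.mul ((Real.differentiableAt_log hx.1.ne').pow 2)).differentiableWithinAt
    · rw [interior_Ioc]
      intro x hx
      have hx0 : x ≠ 0 := hx.1.ne'
      have hd : HasDerivAt (fun x : ℝ => x * (Real.log x) ^ 2)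
          (1 * (Real.log x) ^ 2 + x * (2 * Real.log x ^ 1 * x⁻¹)) x :=
        (hasDerivAt_id x).mul ((Real.hasDerivAt_log hx0).pow 2)
      rw [hd.deriv]
      have hlog : Real.log x ≤ -2 := by
        have := Real.log_le_log hx.1 hx.2.le
        rwa [Real.log_exp] at this
      have h1 : x * (2 * Real.log x ^ 1 * x⁻¹) = 2 * Real.log x := by
        field_simp
      rw [h1]
      nlinarith [mul_nonneg (by linarith : (0:ℝ) ≤ -Real.log x)
        (by linarith : (0:ℝ) ≤ -Real.log x - 2)]
  intro s t hs hst ht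
  exact key ⟨hs, le_trans hst ht⟩ ⟨lt_of_lt_of_le hs hst, ht⟩ hst

/-- Quantitative bound for the maximum of `f(s)/(s+δ)` under a logarithmic growth bound
(key estimate in the proof of Lemma 3.1). -/
theorem sup_quotient_log_bound (L C : ℝ) (hL : 0 < L) (hC : 0 < C) (f : ℝ → ℝ)
    (hf0 : f 0 = 0) (hf : ∀ s ∈ Ioc (0 : ℝ) L, f s ≤ C * s * (Real.log s) ^ 2) :
    ∀ δ : ℝ, 0 < δ → δ < Real.exp (-2) →
      sSup ((fun s => f s / (s + δ)) '' Icc 0 L) ≤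
        C * (|Real.log δ| + |Real.log L|) ^ 2 := by
  intro δ hδ hδ2
  have hB0 : (0:ℝ) ≤ C * (|Real.log δ| + |Real.log L|) ^ 2 := by positivity
  apply Real.sSup_le _ hB0
  rintro x ⟨s, hs, rfl⟩
  simp only
  obtain ⟨hs0, hsL⟩ := hs
  rcases eq_or_lt_of_le hs0 with h0 | h0
  · rw [← h0, hf0, zero_div]; exact hB0
  -- s > 0
  have hsδ : 0 < s + δ := by linarith
  have hδ1 : δ < 1 := lt_trans hδ2 (Real.exp_lt_one_iff.mpr (by norm_num))
  have hlogδ : Real.log δ < 0 := Real.log_neg hδ hδ1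
  have habsδ : |Real.log δ| = -Real.log δ := abs_of_neg hlogδ
  have step1 : f s / (s + δ) ≤ C * s * (Real.log s) ^ 2 / (s + δ) := by
    gcongr
    exact hf s ⟨h0, hsL⟩
  refine le_trans step1 ?_
  rcases le_or_gt s δ with hcase | hcase
  · -- s ≤ δ
    have hmono : s * (Real.log s) ^ 2 ≤ δ * (Real.log δ) ^ 2 :=
      slog_mono s δ h0 hcase hδ2.le
    have h1 : C * s * (Real.log s) ^ 2 / (s + δ) ≤ C * δ * (Real.log δ) ^ 2 / δ := by
      apply div_le_div₀ (by positivity) _ hδ (by linarith)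
      calc C * s * (Real.log s) ^ 2 = C * (s * (Real.log s) ^ 2) := by ring
        _ ≤ C * (δ * (Real.log δ) ^ 2) := by gcongr
        _ = C * δ * (Real.log δ) ^ 2 := by ring
    refine le_trans h1 ?_
    have heq : C * δ * (Real.log δ) ^ 2 / δ = C * (Real.log δ) ^ 2 := by
      field_simp
    rw [heq]
    have : (Real.log δ) ^ 2 ≤ (|Real.log δ| + |Real.log L|) ^ 2 := by
      rw [← sq_abs]
      gcongr
      simp [abs_nonneg]
    nlinarith
  · -- δ < s
    have habs : |Real.log s| ≤ |Real.log δ| + |Real.log L| := by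
      rcases le_or_gt s 1 with hs1 | hs1
      · have hlogs : Real.log s ≤ 0 := Real.log_nonpos h0.le hs1
        have : Real.log δ ≤ Real.log s := Real.log_le_log hδ hcase.le
        rw [abs_of_nonpos hlogs, habsδ]
        have := abs_nonneg (Real.log L)
        linarith
      · have hlogs : 0 ≤ Real.log s := Real.log_nonneg hs1.le
        have h2 : Real.log s ≤ Real.log L := Real.log_le_log h0 hsL
        rw [abs_of_nonneg hlogs]
        have h3 : Real.log L ≤ |Real.log L| := le_abs_self _
        have := abs_nonneg (Real.log δ)
        linarith
    have hsq : (Real.log s) ^ 2 ≤ (|Real.log δ| + |Real.log L|) ^ 2 := by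
      rw [← sq_abs]
      gcongr
    have h1 : C * s * (Real.log s) ^ 2 / (s + δ) ≤ C * s * (Real.log s) ^ 2 / s := by
      apply div_le_div_of_nonneg_left (by positivity) h0 (by linarith)
    refine le_trans h1 ?_
    have heq : C * s * (Real.log s) ^ 2 / s = C * (Real.log s) ^ 2 := by
      field_simp
    rw [heq]
    nlinarith
end
end

section
/- Krylov–Safonov propagating ink-spots lemma: For every n ≥ 1 there exists a constant c = c(n) > 0 with the following property. Let ρ₀ > 0, let B_{ρ₀} ⊆ ℝⁿ be an open ball of radius ρ₀, let δ ∈ (0,1), and let E ⊆ F ⊆ B_{ρ₀} be open sets such that vol(E) ≤ (1−δ) vol(B_{ρ₀}) and such that for every open ball B ⊆ B_{ρ₀}, if vol(B ∩ E) > (1−δ) vol(B) then B ⊆ F. Then vol(E) ≤ (1 − cδ) vol(F). -/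
open MeasureTheory Metric Set Filter Topology

noncomputable section

namespace InkSpots

variable {n : ℕ}

lemma euclid_nontrivial (hn : 1 ≤ n) : Nontrivial (EuclideanSpace ℝ (Fin n)) :=
  Module.nontrivial_of_finrank_pos (R := ℝ) (by rw [finrank_euclideanSpace_fin]; omega)

lemma vol_ball (hn : 1 ≤ n) (c : EuclideanSpace ℝ (Fin n)) (t : ℝ) :
    volume (ball c t)
      = ENNReal.ofReal (max t 0 ^ n) * volume (ball (0 : EuclideanSpace ℝ (Fin n)) 1) := by
  haveI := euclid_nontrivial hn
  rcases le_or_gt 0 t with h | h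
  · rw [max_eq_left h]
    have := Measure.addHaar_ball (volume : Measure (EuclideanSpace ℝ (Fin n))) c h
    rwa [finrank_euclideanSpace_fin] at this
  · rw [ball_eq_empty.2 h.le, measure_empty, max_eq_right h.le, zero_pow (by omega),
      ENNReal.ofReal_zero, zero_mul]

lemma toReal_vol_ball (hn : 1 ≤ n) (c : EuclideanSpace ℝ (Fin n)) (t : ℝ) :
    (volume (ball c t)).toReal
      = max t 0 ^ n * (volume (ball (0 : EuclideanSpace ℝ (Fin n)) 1)).toReal := by
  rw [vol_ball hn, ENNReal.toReal_mul, ENNReal.toReal_ofReal (by positivity)]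

lemma cont_inter (hn : 1 ≤ n) (E : Set (EuclideanSpace ℝ (Fin n))) :
    Continuous fun p : EuclideanSpace ℝ (Fin n) × ℝ =>
      (volume (ball p.1 p.2 ∩ E)).toReal := by
  set v1 : ℝ := (volume (ball (0 : EuclideanSpace ℝ (Fin n)) 1)).toReal with hv1
  rw [continuous_iff_continuousAt]
  rintro ⟨c₀, r₀⟩
  set f : EuclideanSpace ℝ (Fin n) × ℝ → ℝ :=
    fun p => (volume (ball p.1 p.2 ∩ E)).toReal with hf
  set e : EuclideanSpace ℝ (Fin n) × ℝ → ℝ :=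
    fun p => dist p.1 c₀ + |p.2 - r₀| with he
  set g : EuclideanSpace ℝ (Fin n) × ℝ → ℝ :=
    fun p => (max (r₀ + e p) 0 ^ n - max (r₀ - e p) 0 ^ n) * v1 with hg
  have hfin : ∀ (c : EuclideanSpace ℝ (Fin n)) (t : ℝ)
      (S : Set (EuclideanSpace ℝ (Fin n))), S ⊆ ball c t → volume S ≠ ⊤ :=
    fun c t S hS => ((measure_mono hS).trans_lt measure_ball_lt_top).ne
  -- the key bound
  have key : ∀ p, |f p - f (c₀, r₀)| ≤ g p := by
    rintro ⟨c, r⟩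
    have hd : dist c c₀ ≤ e (c, r) := by
      simp only [he]; nlinarith [abs_nonneg (r - r₀)]
    have hr1 : r - r₀ ≤ e (c, r) - dist c c₀ := by
      simp only [he]; nlinarith [le_abs_self (r - r₀)]
    have hr2 : r₀ - r ≤ e (c, r) - dist c c₀ := by
      simp only [he]; nlinarith [neg_abs_le (r - r₀)]
    have he0 : 0 ≤ e (c, r) := by simp only [he]; positivity
    set ep := e (c, r) with hep
    set S : Set (EuclideanSpace ℝ (Fin n)) := ball c₀ (r₀ + ep) \ ball c₀ (r₀ - ep) with hS
    have h1 : ball c r \ ball c₀ r₀ ⊆ S := by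
      rintro z ⟨hz1, hz2⟩
      rw [mem_ball] at hz1
      rw [mem_ball, not_lt] at hz2
      refine ⟨mem_ball.2 ?_, fun hz => ?_⟩
      · have := dist_triangle z c c₀
        linarith
      · rw [mem_ball] at hz; linarith
    have h2 : ball c₀ r₀ \ ball c r ⊆ S := by
      rintro z ⟨hz1, hz2⟩
      rw [mem_ball] at hz1
      rw [mem_ball, not_lt] at hz2
      refine ⟨mem_ball.2 (by linarith), fun hz => ?_⟩
      rw [mem_ball] at hz
      have := dist_triangle z c₀ c
      rw [dist_comm c₀ c] at this
      linarith
    have hvolS : (volume S).toReal = g (c, r) := by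
      have hsub : ball c₀ (r₀ - ep) ⊆ ball c₀ (r₀ + ep) := ball_subset_ball (by linarith)
      have hd2 : volume S = volume (ball c₀ (r₀ + ep)) - volume (ball c₀ (r₀ - ep)) :=
        measure_diff hsub measurableSet_ball.nullMeasurableSet (hfin _ _ _ (Subset.refl _))
      rw [hd2, ENNReal.toReal_sub_of_le (measure_mono hsub) (hfin _ _ _ (Subset.refl _)),
        toReal_vol_ball hn c₀ (r₀ + ep), toReal_vol_ball hn c₀ (r₀ - ep), hg, ← hv1]
      ring
    have hb1 : f (c, r) - f (c₀, r₀) ≤ g (c, r) := by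
      have hsub : ball c r ∩ E ⊆ (ball c₀ r₀ ∩ E) ∪ (ball c r \ ball c₀ r₀) := by
        rintro z ⟨hz1, hz2⟩
        by_cases hz : z ∈ ball c₀ r₀
        · exact Or.inl ⟨hz, hz2⟩
        · exact Or.inr ⟨hz1, hz⟩
      have := (measure_mono hsub).trans (measure_union_le (μ := (volume : Measure (EuclideanSpace ℝ (Fin n)))) _ _)
      have h2' : volume (ball c r \ ball c₀ r₀) ≤ volume S := measure_mono h1
      have hB : volume (ball c₀ r₀ ∩ E) ≠ ⊤ := hfin _ _ _ inter_subset_left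
      have hSfin : volume S ≠ ⊤ := hfin _ _ _ diff_subset
      have := this.trans (add_le_add_right h2' _)
      have := ENNReal.toReal_mono (by
        exact ENNReal.add_ne_top.2 ⟨hB, hSfin⟩) this
      rw [ENNReal.toReal_add hB hSfin] at this
      simp only [hf] at *
      linarith [hvolS]
    have hb2 : f (c₀, r₀) - f (c, r) ≤ g (c, r) := by
      have hsub : ball c₀ r₀ ∩ E ⊆ (ball c r ∩ E) ∪ (ball c₀ r₀ \ ball c r) := by
        rintro z ⟨hz1, hz2⟩
        by_cases hz : z ∈ ball c r
        · exact Or.inl ⟨hz, hz2⟩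
        · exact Or.inr ⟨hz1, hz⟩
      have := (measure_mono hsub).trans (measure_union_le (μ := (volume : Measure (EuclideanSpace ℝ (Fin n)))) _ _)
      have h2' : volume (ball c₀ r₀ \ ball c r) ≤ volume S := measure_mono h2
      have hB : volume (ball c r ∩ E) ≠ ⊤ := hfin _ _ _ inter_subset_left
      have hSfin : volume S ≠ ⊤ := hfin _ _ _ diff_subset
      have := this.trans (add_le_add_right h2' _)
      have := ENNReal.toReal_mono (ENNReal.add_ne_top.2 ⟨hB, hSfin⟩) this
      rw [ENNReal.toReal_add hB hSfin] at this
      simp only [hf] at *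
      linarith [hvolS]
    rw [abs_sub_le_iff]
    exact ⟨hb1, hb2⟩
  -- conclude continuity from the squeeze
  have hge : Continuous e := by
    simp only [he]
    fun_prop
  have hgc : Continuous g := by
    simp only [hg]
    fun_prop
  have hg0 : g (c₀, r₀) = 0 := by
    simp only [hg, he]
    simp
  have htend : Tendsto (fun p => f p - f (c₀, r₀)) (𝓝 (c₀, r₀)) (𝓝 0) := by
    apply squeeze_zero_norm key
    have := hgc.continuousAt (x := (c₀, r₀))
    rw [ContinuousAt, hg0] at this
    exact this
  have : Tendsto (fun p => f p - f (c₀, r₀) + f (c₀, r₀)) (𝓝 (c₀, r₀)) (𝓝 (0 + f (c₀, r₀))) :=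
    htend.add_const _
  rw [ContinuousAt]
  simpa using this


lemma exists_good_ball (hn : 1 ≤ n)
    {ρ₀ : ℝ} (hρ₀ : 0 < ρ₀) {y₀ : EuclideanSpace ℝ (Fin n)}
    {δ : ℝ} (hδ0 : 0 < δ) (hδ1 : δ < 1)
    {E : Set (EuclideanSpace ℝ (Fin n))}
    (hEball : E ⊆ ball y₀ ρ₀)
    (hEvol : volume E ≤ ENNReal.ofReal (1 - δ) * volume (ball y₀ ρ₀))
    {x : EuclideanSpace ℝ (Fin n)} (hxE : x ∈ E)
    (hx : Tendsto (fun r => volume (E ∩ closedBall x r) / volume (closedBall x r))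
      (𝓝[>] 0) (𝓝 1)) :
    ∃ y : EuclideanSpace ℝ (Fin n), ∃ r : ℝ, 0 < r ∧ r ≤ ρ₀ ∧ x ∈ ball y r ∧
      ball y r ⊆ ball y₀ ρ₀ ∧
      volume (ball y r ∩ E) = ENNReal.ofReal (1 - 3*δ/4) * volume (ball y r) := by
  haveI := euclid_nontrivial hn
  have hxball : x ∈ ball y₀ ρ₀ := hEball hxE
  rw [mem_ball] at hxball
  set dx := dist x y₀ with hdx
  have hdx0 : 0 ≤ dx := dist_nonneg
  -- choose a small radius with high density
  have hev1 : ∀ᶠ r in 𝓝[>] (0:ℝ),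
      ENNReal.ofReal (1 - δ/2) < volume (E ∩ closedBall x r) / volume (closedBall x r) := by
    apply hx.eventually
    apply Ioi_mem_nhds
    rw [← ENNReal.ofReal_one]
    exact (ENNReal.ofReal_lt_ofReal_iff (by norm_num)).mpr (by linarith)
  have hev2 : ∀ᶠ r in 𝓝[>] (0:ℝ), r < ρ₀ - dx :=
    eventually_nhdsWithin_of_eventually_nhds (Filter.Tendsto.eventually_lt_const
      (by linarith) tendsto_id)
  have hev3 : ∀ᶠ r in 𝓝[>] (0:ℝ), 0 < r := eventually_mem_nhdsWithin
  obtain ⟨r₁, hr₁d, hr₁ρ, hr₁0⟩ : ∃ r₁ : ℝ,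
      ENNReal.ofReal (1 - δ/2) < volume (E ∩ closedBall x r₁) / volume (closedBall x r₁) ∧
      r₁ < ρ₀ - dx ∧ 0 < r₁ := by
    obtain ⟨r₁, h1, h2, h3⟩ := (hev1.and (hev2.and hev3)).exists
    exact ⟨r₁, h1, h2, h3⟩
  -- convert to an open-ball density bound
  have hcb_ball : volume (closedBall x r₁) = volume (ball x r₁) :=
    Measure.addHaar_closedBall_eq_addHaar_ball _ _ _
  have hEcb_ball : volume (E ∩ closedBall x r₁) ≤ volume (ball x r₁ ∩ E) := by
    have hsub : E ∩ closedBall x r₁ ⊆ (ball x r₁ ∩ E) ∪ sphere x r₁ := by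
      rintro z ⟨hz1, hz2⟩
      rcases lt_or_eq_of_le (mem_closedBall.1 hz2) with h | h
      · exact Or.inl ⟨mem_ball.2 h, hz1⟩
      · exact Or.inr h
    calc volume (E ∩ closedBall x r₁)
        ≤ volume (ball x r₁ ∩ E) + volume (sphere x r₁) :=
          (measure_mono hsub).trans
            (measure_union_le (μ := (volume : Measure (EuclideanSpace ℝ (Fin n)))) _ _)
      _ = volume (ball x r₁ ∩ E) := by
          rw [Measure.addHaar_sphere, add_zero]
  have hball_pos : (0:ENNReal) < volume (ball x r₁) := measure_ball_pos _ _ hr₁0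
  have hball_fin : volume (ball x r₁) ≠ ⊤ := measure_ball_lt_top.ne
  have hstart : ENNReal.ofReal (1 - δ/2) * volume (ball x r₁) < volume (ball x r₁ ∩ E) := by
    rw [ENNReal.lt_div_iff_mul_lt (Or.inl ?hne0) (Or.inl ?hnetop)] at hr₁d
    · rw [hcb_ball] at hr₁d
      exact lt_of_lt_of_le hr₁d hEcb_ball
    case hne0 => rw [hcb_ball]; exact hball_pos.ne'
    case hnetop => rw [hcb_ball]; exact hball_fin
  -- the moving ball
  set cc : ℝ → EuclideanSpace ℝ (Fin n) := fun s => x + s • (y₀ - x) with hcc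
  set rr : ℝ → ℝ := fun s => (1 - s) * r₁ + s * ρ₀ with hrr
  have hc0 : cc 0 = x := by simp [hcc]
  have hc1 : cc 1 = y₀ := by simp [hcc]
  have hr0 : rr 0 = r₁ := by simp [hrr]
  have hr1 : rr 1 = ρ₀ := by simp [hrr]
  have hcont_pair : Continuous fun s : ℝ => ((cc s, rr s) :
      EuclideanSpace ℝ (Fin n) × ℝ) := by
    apply Continuous.prodMk
    · simp only [hcc]; fun_prop
    · simp only [hrr]; fun_prop
  set φ : ℝ → ℝ := fun s => (volume (ball (cc s) (rr s) ∩ E)).toReal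
      - (1 - 3*δ/4) * (volume (ball (cc s) (rr s))).toReal with hφ
  have hφcont : Continuous φ := by
    have h1 := (cont_inter hn E).comp hcont_pair
    have h2 : Continuous fun p : EuclideanSpace ℝ (Fin n) × ℝ =>
        (volume (ball p.1 p.2)).toReal := by simpa using cont_inter hn univ
    have h2' := h2.comp hcont_pair
    simp only [hφ]
    exact h1.sub (continuous_const.mul h2')
  have hrrpos : ∀ s ∈ Icc (0:ℝ) 1, 0 < rr s := by
    intro s hs
    simp only [hrr]
    rcases le_or_gt s (1/2) with h | h
    · have h2 : (1/2:ℝ) ≤ 1 - s := by linarith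
      have h3 := mul_le_mul_of_nonneg_right h2 hr₁0.le
      linarith [mul_nonneg hs.1 hρ₀.le]
    · have h3 := mul_le_mul_of_nonneg_right h.le hρ₀.le
      linarith [mul_nonneg (sub_nonneg.2 hs.2) hr₁0.le]
  have hφ0 : 0 < φ 0 := by
    have hV0 : (0:ℝ) < (volume (ball x r₁)).toReal :=
      ENNReal.toReal_pos hball_pos.ne' hball_fin
    have : (1 - δ/2) * (volume (ball x r₁)).toReal < (volume (ball x r₁ ∩ E)).toReal := by
      have hfin2 : volume (ball x r₁ ∩ E) ≠ ⊤ :=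
        ((measure_mono inter_subset_left).trans_lt measure_ball_lt_top).ne
      have := ENNReal.toReal_strict_mono hfin2 hstart
      rwa [ENNReal.toReal_mul, ENNReal.toReal_ofReal (by linarith)] at this
    simp only [hφ, hc0, hr0]
    nlinarith [mul_pos hδ0 hV0]
  have hφ1 : φ 1 < 0 := by
    have hBE : ball y₀ ρ₀ ∩ E = E := inter_eq_self_of_subset_right hEball
    have hVfin : volume (ball y₀ ρ₀) ≠ ⊤ := measure_ball_lt_top.ne
    have hV1 : (0:ℝ) < (volume (ball y₀ ρ₀)).toReal :=
      ENNReal.toReal_pos (measure_ball_pos _ _ hρ₀).ne' hVfin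
    have hle : (volume E).toReal ≤ (1 - δ) * (volume (ball y₀ ρ₀)).toReal := by
      have := ENNReal.toReal_mono (by
        exact ENNReal.mul_ne_top ENNReal.ofReal_ne_top hVfin) hEvol
      rwa [ENNReal.toReal_mul, ENNReal.toReal_ofReal (by linarith)] at this
    simp only [hφ, hc1, hr1, hBE]
    nlinarith [mul_pos hδ0 hV1]
  -- intermediate value theorem
  obtain ⟨s, hs, hφs⟩ : ∃ s ∈ Icc (0:ℝ) 1, φ s = 0 := by
    have := intermediate_value_Icc' (zero_le_one) hφcont.continuousOn
    have h0 : (0:ℝ) ∈ Icc (φ 1) (φ 0) := ⟨hφ1.le, hφ0.le⟩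
    obtain ⟨s, hs, hφs⟩ := this h0
    exact ⟨s, hs, hφs⟩
  refine ⟨cc s, rr s, hrrpos s hs, ?_, ?_, ?_, ?_⟩
  · -- rr s ≤ ρ₀
    simp only [hrr]
    have h1 : r₁ ≤ ρ₀ := by linarith
    have h2 := mul_le_mul_of_nonneg_left h1 (sub_nonneg.2 hs.2)
    linarith
  · -- x ∈ ball (cc s) (rr s)
    rw [mem_ball, dist_eq_norm]
    have hxcc : x - cc s = (-s) • (y₀ - x) := by
      simp only [hcc]
      module
    rw [hxcc, norm_smul, norm_neg, Real.norm_eq_abs, abs_of_nonneg hs.1]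
    have hnorm : ‖y₀ - x‖ = dx := by rw [hdx, dist_eq_norm, norm_sub_rev]
    rw [hnorm]
    simp only [hrr]
    rcases eq_or_lt_of_le hs.1 with h | h
    · rw [← h]; simpa using hr₁0
    · linarith [mul_pos h (sub_pos.2 hxball), mul_nonneg (sub_nonneg.2 hs.2) hr₁0.le]
  · -- ball (cc s) (rr s) ⊆ ball y₀ ρ₀
    apply ball_subset_ball'
    have hccy : cc s - y₀ = (1 - s) • (x - y₀) := by
      simp only [hcc]
      module
    have : dist (cc s) y₀ = (1 - s) * dx := by
      rw [dist_eq_norm, hccy, norm_smul, Real.norm_eq_abs, abs_of_nonneg (by linarith [hs.2]),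
        hdx, dist_eq_norm]
    rw [this]
    simp only [hrr]
    have h1 : r₁ + dx ≤ ρ₀ := by linarith
    have h2 := mul_le_mul_of_nonneg_left h1 (sub_nonneg.2 hs.2)
    linarith
  · -- the volume identity
    have hEq : (volume (ball (cc s) (rr s) ∩ E)).toReal
        = (1 - 3*δ/4) * (volume (ball (cc s) (rr s))).toReal := by
      simp only [hφ] at hφs
      linarith
    have hfin1 : volume (ball (cc s) (rr s) ∩ E) ≠ ⊤ :=
      ((measure_mono inter_subset_left).trans_lt measure_ball_lt_top).ne
    have hfin2 : volume (ball (cc s) (rr s)) ≠ ⊤ := measure_ball_lt_top.ne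
    rw [← ENNReal.ofReal_toReal hfin1, hEq, ENNReal.ofReal_mul (by linarith),
      ENNReal.ofReal_toReal hfin2]

lemma vol_cb4 (hn : 1 ≤ n) (y : EuclideanSpace ℝ (Fin n)) {r : ℝ} (hr : 0 < r) :
    volume (closedBall y (4*r)) = ENNReal.ofReal ((4:ℝ)^n) * volume (ball y r) := by
  haveI := euclid_nontrivial hn
  have h1 := Measure.addHaar_closedBall (volume : Measure (EuclideanSpace ℝ (Fin n))) y
    (show (0:ℝ) ≤ 4*r by positivity)
  rw [finrank_euclideanSpace_fin] at h1
  rw [h1, vol_ball hn y r, max_eq_left hr.le, mul_pow,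
    ENNReal.ofReal_mul (by positivity), mul_assoc]

end InkSpots

open InkSpots in
/-- Krylov–Safonov propagating ink-spots lemma. -/
theorem ink_spots_lemma (n : ℕ) (hn : 1 ≤ n) :
    ∃ c : ℝ, 0 < c ∧
      ∀ ρ₀ : ℝ, 0 < ρ₀ → ∀ y₀ : EuclideanSpace ℝ (Fin n),
      ∀ δ : ℝ, 0 < δ → δ < 1 →
      ∀ E F : Set (EuclideanSpace ℝ (Fin n)), IsOpen E → IsOpen F →
        E ⊆ F → F ⊆ ball y₀ ρ₀ →
        volume E ≤ ENNReal.ofReal (1 - δ) * volume (ball y₀ ρ₀) →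
        (∀ y : EuclideanSpace ℝ (Fin n), ∀ r : ℝ, 0 < r → ball y r ⊆ ball y₀ ρ₀ →
          ENNReal.ofReal (1 - δ) * volume (ball y r) < volume (ball y r ∩ E) →
          ball y r ⊆ F) →
        volume E ≤ ENNReal.ofReal (1 - c * δ) * volume F := by
  haveI := euclid_nontrivial hn
  set M : ℝ := 4 ^ n with hM
  have hM1 : (1:ℝ) ≤ M := one_le_pow₀ (by norm_num)
  refine ⟨3 / (8 * M), by positivity, ?_⟩
  set c : ℝ := 3 / (8 * M) with hc
  intro ρ₀ hρ₀ y₀ δ hδ0 hδ1 E F hEopen hFopen hEF hFball hEvol h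
  have hEball : E ⊆ ball y₀ ρ₀ := hEF.trans hFball
  -- density points
  set T : EuclideanSpace ℝ (Fin n) → Prop := fun x =>
    Filter.Tendsto (fun r => volume (E ∩ closedBall x r) / volume (closedBall x r))
      (𝓝[>] 0) (𝓝 1) with hT
  set D : Set (EuclideanSpace ℝ (Fin n)) := {x | x ∈ E ∧ T x} with hD
  have hED : volume (E \ D) = 0 := by
    have := Besicovitch.ae_tendsto_measure_inter_div
      (volume : Measure (EuclideanSpace ℝ (Fin n))) E
    rw [Filter.Eventually] at this
    rw [mem_ae_iff, Measure.restrict_apply' hEopen.measurableSet] at this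
    have heq : E \ D = {x | Tendsto
        (fun r => volume (E ∩ closedBall x r) / volume (closedBall x r))
        (𝓝[>] 0) (𝓝 1)}ᶜ ∩ E := by
      ext z
      simp only [hD, hT, mem_diff, mem_setOf_eq, mem_inter_iff, mem_compl_iff]
      tauto
    rw [heq]
    exact this
  -- the family of good balls
  set t : Set (EuclideanSpace ℝ (Fin n) × ℝ) := {p | 0 < p.2 ∧ p.2 ≤ ρ₀ ∧
    ball p.1 p.2 ⊆ ball y₀ ρ₀ ∧
    volume (ball p.1 p.2 ∩ E) = ENNReal.ofReal (1 - 3*δ/4) * volume (ball p.1 p.2)} with ht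
  have hcover : ∀ x ∈ D, ∃ p ∈ t, x ∈ ball p.1 p.2 := by
    rintro x ⟨hxE, hxT⟩
    obtain ⟨y, r, hr0, hrρ, hxball, hsub, hvol⟩ :=
      exists_good_ball hn hρ₀ hδ0 hδ1 hEball hEvol hxE hxT
    exact ⟨(y, r), ⟨hr0, hrρ, hsub, hvol⟩, hxball⟩
  -- Vitali covering
  obtain ⟨u, hut, hdisj, hcov⟩ :=
    Vitali.exists_disjoint_subfamily_covering_enlargement_closedBall t
      Prod.fst Prod.snd ρ₀ (fun p hp => hp.2.1) 4 (by norm_num)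
  -- countability of u
  have hucnt : u.Countable := by
    have hpos : ∀ b : u, 0 < volume (closedBall (b : EuclideanSpace ℝ (Fin n) × ℝ).1
        (b : EuclideanSpace ℝ (Fin n) × ℝ).2) := by
      rintro ⟨b, hb⟩
      exact measure_closedBall_pos _ _ (hut hb).1
    have hdisj' : Pairwise (Function.onFun Disjoint fun b : u =>
        closedBall (b : EuclideanSpace ℝ (Fin n) × ℝ).1
          (b : EuclideanSpace ℝ (Fin n) × ℝ).2) := by
      rintro ⟨a, ha⟩ ⟨b, hb⟩ hab
      exact hdisj ha hb (by simpa [Subtype.ext_iff] using hab)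
    have := Measure.countable_meas_pos_of_disjoint_iUnion
      (μ := (volume : Measure (EuclideanSpace ℝ (Fin n))))
      (fun b : u => measurableSet_closedBall) hdisj'
    have huniv : {i : u | 0 < volume (closedBall (i : EuclideanSpace ℝ (Fin n) × ℝ).1
        (i : EuclideanSpace ℝ (Fin n) × ℝ).2)} = univ := by
      ext i; simpa using hpos i
    rw [huniv] at this
    rw [← Set.countable_coe_iff]
    exact countable_univ_iff.mp this
  -- balls in the family are inside F
  have hballF : ∀ p ∈ t, ball p.1 p.2 ⊆ F := by
    rintro p ⟨hp0, hpρ, hpsub, hpvol⟩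
    apply h p.1 p.2 hp0 hpsub
    rw [hpvol]
    have hpos : volume (ball p.1 p.2) ≠ 0 := (measure_ball_pos _ _ hp0).ne'
    have hfin : volume (ball p.1 p.2) ≠ ⊤ := measure_ball_lt_top.ne
    rw [ENNReal.mul_lt_mul_iff_left hpos hfin]
    exact (ENNReal.ofReal_lt_ofReal_iff (by linarith)).mpr (by linarith)
  -- D covered by enlarged balls
  have hDsub : D ⊆ ⋃ b ∈ u, closedBall b.1 (4 * b.2) := by
    intro x hx
    obtain ⟨p, hpt, hxp⟩ := hcover x hx
    obtain ⟨b, hbu, hsub⟩ := hcov p hpt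
    exact mem_biUnion hbu (hsub (ball_subset_closedBall hxp))
  have hED' : volume E ≤ volume D := by
    calc volume E ≤ volume (D ∪ (E \ D)) := measure_mono (fun x hx => by
          by_cases hxD : x ∈ D
          · exact Or.inl hxD
          · exact Or.inr ⟨hx, hxD⟩)
      _ ≤ volume D + volume (E \ D) :=
          measure_union_le (μ := (volume : Measure (EuclideanSpace ℝ (Fin n)))) _ _
      _ = volume D := by rw [hED, add_zero]
  have hsum1 : volume E ≤ ENNReal.ofReal ((4:ℝ)^n)
      * ∑' b : u, volume (ball (b : EuclideanSpace ℝ (Fin n) × ℝ).1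
        (b : EuclideanSpace ℝ (Fin n) × ℝ).2) := by
    calc volume E ≤ volume D := hED'
      _ ≤ volume (⋃ b ∈ u, closedBall b.1 (4 * b.2)) := measure_mono hDsub
      _ ≤ ∑' b : u, volume (closedBall (b : EuclideanSpace ℝ (Fin n) × ℝ).1
            (4 * (b : EuclideanSpace ℝ (Fin n) × ℝ).2)) :=
          measure_biUnion_le volume hucnt _
      _ = ∑' b : u, ENNReal.ofReal ((4:ℝ)^n)
            * volume (ball (b : EuclideanSpace ℝ (Fin n) × ℝ).1
              (b : EuclideanSpace ℝ (Fin n) × ℝ).2) := by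
          apply tsum_congr
          rintro ⟨b, hb⟩
          exact vol_cb4 hn _ (hut hb).1
      _ = _ := ENNReal.tsum_mul_left
  have hlow : ∀ b ∈ u, volume (ball (b : EuclideanSpace ℝ (Fin n) × ℝ).1 b.2 ∩ (F \ E))
      = ENNReal.ofReal (3*δ/4) * volume (ball b.1 b.2) := by
    intro b hb
    obtain ⟨hb0, hbρ, hbsub, hbvol⟩ := hut hb
    have hBF : ball b.1 b.2 ⊆ F := hballF b (hut hb)
    have hinter : ball b.1 b.2 ∩ (F \ E) = ball b.1 b.2 \ E := by
      ext z
      constructor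
      · rintro ⟨h1, _, h3⟩; exact ⟨h1, h3⟩
      · rintro ⟨h1, h2⟩; exact ⟨h1, hBF h1, h2⟩
    rw [hinter]
    have hsplit : volume (ball b.1 b.2 ∩ E) + volume (ball b.1 b.2 \ E)
        = volume (ball b.1 b.2) := measure_inter_add_diff _ hEopen.measurableSet
    rw [hbvol] at hsplit
    have hone : ENNReal.ofReal (1 - 3*δ/4) + ENNReal.ofReal (3*δ/4) = 1 := by
      rw [← ENNReal.ofReal_add (by linarith) (by linarith)]
      norm_num
    have hsplit2 : ENNReal.ofReal (1 - 3*δ/4) * volume (ball b.1 b.2)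
        + ENNReal.ofReal (3*δ/4) * volume (ball b.1 b.2) = volume (ball b.1 b.2) := by
      rw [← add_mul, hone, one_mul]
    have hfin : ENNReal.ofReal (1 - 3*δ/4) * volume (ball b.1 b.2) ≠ ⊤ :=
      ENNReal.mul_ne_top ENNReal.ofReal_ne_top measure_ball_lt_top.ne
    exact (ENNReal.add_right_inj hfin).mp (hsplit.trans hsplit2.symm)
  have hsum2 : ENNReal.ofReal (3*δ/4)
      * ∑' b : u, volume (ball (b : EuclideanSpace ℝ (Fin n) × ℝ).1
        (b : EuclideanSpace ℝ (Fin n) × ℝ).2) ≤ volume (F \ E) := by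
    rw [← ENNReal.tsum_mul_left]
    have heq : ∑' b : u, ENNReal.ofReal (3*δ/4)
        * volume (ball (b : EuclideanSpace ℝ (Fin n) × ℝ).1
          (b : EuclideanSpace ℝ (Fin n) × ℝ).2)
        = ∑' b : u, volume (ball (b : EuclideanSpace ℝ (Fin n) × ℝ).1
          (b : EuclideanSpace ℝ (Fin n) × ℝ).2 ∩ (F \ E)) := by
      apply tsum_congr
      rintro ⟨b, hb⟩
      exact (hlow b hb).symm
    rw [heq]
    rw [← measure_biUnion hucnt ?_ (fun b _ => (measurableSet_ball.inter
      (hFopen.measurableSet.diff hEopen.measurableSet)))]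
    · exact measure_mono (iUnion₂_subset fun b _ => inter_subset_right)
    · apply hdisj.mono
      intro b
      exact le_trans inter_subset_left ball_subset_closedBall
  have hmain : ENNReal.ofReal (3*δ/4) * volume E
      ≤ ENNReal.ofReal ((4:ℝ)^n) * volume (F \ E) := by
    calc ENNReal.ofReal (3*δ/4) * volume E
        ≤ ENNReal.ofReal (3*δ/4) * (ENNReal.ofReal ((4:ℝ)^n)
          * ∑' b : u, volume (ball (b : EuclideanSpace ℝ (Fin n) × ℝ).1
            (b : EuclideanSpace ℝ (Fin n) × ℝ).2)) := mul_le_mul_right hsum1 _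
      _ = ENNReal.ofReal ((4:ℝ)^n) * (ENNReal.ofReal (3*δ/4)
          * ∑' b : u, volume (ball (b : EuclideanSpace ℝ (Fin n) × ℝ).1
            (b : EuclideanSpace ℝ (Fin n) × ℝ).2)) := by ring
      _ ≤ ENNReal.ofReal ((4:ℝ)^n) * volume (F \ E) := mul_le_mul_right hsum2 _
  -- pass to real numbers
  have hEfin : volume E ≠ ⊤ := ((measure_mono hEball).trans_lt measure_ball_lt_top).ne
  have hFfin : volume F ≠ ⊤ := ((measure_mono hFball).trans_lt measure_ball_lt_top).ne
  have hFEfin : volume (F \ E) ≠ ⊤ :=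
    ((measure_mono (diff_subset.trans hFball)).trans_lt measure_ball_lt_top).ne
  set a : ℝ := (volume E).toReal with ha'
  set fV : ℝ := (volume F).toReal with hfV'
  have hdiff : (volume (F \ E)).toReal = fV - a := by
    rw [measure_diff hEF hEopen.measurableSet.nullMeasurableSet hEfin,
      ENNReal.toReal_sub_of_le (measure_mono hEF) hFfin]
  have hreal : 3*δ/4 * a ≤ M * (fV - a) := by
    have h2 := ENNReal.toReal_mono (ENNReal.mul_ne_top ENNReal.ofReal_ne_top hFEfin) hmain
    rw [ENNReal.toReal_mul, ENNReal.toReal_mul, ENNReal.toReal_ofReal (by linarith),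
      ENNReal.toReal_ofReal (by positivity), hdiff] at h2
    exact h2
  have ha : 0 ≤ a := ENNReal.toReal_nonneg
  have hc0 : 0 < c := by positivity
  have hM0 : M ≠ 0 := by positivity
  have hcM : c * M = 3/8 := by
    rw [hc]
    field_simp
  have key2 : 2*c*δ*a ≤ fV - a := by
    have h1 := mul_le_mul_of_nonneg_left hreal hc0.le
    have h2 : c * (M * (fV - a)) = 3/8 * (fV - a) := by rw [← mul_assoc, hcM]
    linarith
  have hcδ : c * δ ≤ 1/2 := by
    have hcle : c ≤ 3/8 := by
      rw [hc]
      exact div_le_div_of_nonneg_left (by norm_num) (by norm_num) (by linarith)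
    nlinarith
  have hfinal : a ≤ (1 - c*δ) * fV := by
    have h1 := mul_le_mul_of_nonneg_left key2 (show (0:ℝ) ≤ 1 - c*δ by linarith)
    have h2 : 0 ≤ (1 - 2*(c*δ)) * (c*δ*a) :=
      mul_nonneg (by linarith) (mul_nonneg (mul_nonneg hc0.le hδ0.le) ha)
    nlinarith
  calc volume E = ENNReal.ofReal a := (ENNReal.ofReal_toReal hEfin).symm
    _ ≤ ENNReal.ofReal ((1 - c*δ) * fV) := ENNReal.ofReal_le_ofReal hfinal
    _ = ENNReal.ofReal (1 - c*δ) * ENNReal.ofReal fV := ENNReal.ofReal_mul (by linarith)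
    _ = ENNReal.ofReal (1 - c*δ) * volume F := by rw [hfV', ENNReal.ofReal_toReal hFfin]
end
end

section
/- Harnack chains of overlapping balls in an annulus: For every n ≥ 2 there exist constants C(n) > 0 and c(n) > 0 with the following property. For every R > 2, every r₀ ∈ (0, 1], and every pair of points x, y in the open annulus G := { w ∈ ℝⁿ : 2 < |w| < R }, there exist an integer d with 1 ≤ d ≤ C(n) R / r₀ and points z₁, …, z_d ∈ ℝⁿ such that z₁ = x, z_d = y, dist(z_i, G) < r₀ for every i = 1, …, d, and vol( B_{r₀}(z_i) ∩ B_{r₀}(z_{i+1}) ) ≥ c(n) r₀ⁿ for every i = 1, …, d−1. -/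
open MeasureTheory Metric Set


/-- Normalization map is Lipschitz away from 0. -/
lemma normalize_lip {E : Type*} [NormedAddCommGroup E] [NormedSpace ℝ E]
    {v w : E} {ρ : ℝ} (hρ : 0 < ρ) (hv : ρ ≤ ‖v‖) (hw : ρ ≤ ‖w‖) :
    ‖‖v‖⁻¹ • v - ‖w‖⁻¹ • w‖ ≤ (2 / ρ) * ‖v - w‖ := by
  have hv0 : (0:ℝ) < ‖v‖ := lt_of_lt_of_le hρ hv
  have hw0 : (0:ℝ) < ‖w‖ := lt_of_lt_of_le hρ hw
  have key : ‖v‖⁻¹ • v - ‖w‖⁻¹ • w = ‖v‖⁻¹ • (v - w) + (‖v‖⁻¹ - ‖w‖⁻¹) • w := by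
    rw [smul_sub, sub_smul]; abel
  rw [key]
  have h1 : ‖‖v‖⁻¹ • (v - w)‖ = ‖v‖⁻¹ * ‖v - w‖ := by
    rw [norm_smul, Real.norm_eq_abs, abs_of_pos (by positivity)]
  have h2 : ‖(‖v‖⁻¹ - ‖w‖⁻¹) • w‖ = |‖v‖⁻¹ - ‖w‖⁻¹| * ‖w‖ := by
    rw [norm_smul, Real.norm_eq_abs]
  have h3 : |‖v‖⁻¹ - ‖w‖⁻¹| * ‖w‖ ≤ ‖v‖⁻¹ * ‖v - w‖ := by
    have : |‖v‖⁻¹ - ‖w‖⁻¹| = |‖w‖ - ‖v‖| / (‖v‖ * ‖w‖) := by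
      rw [← abs_of_pos (show (0:ℝ) < ‖v‖ * ‖w‖ by positivity), ← abs_div]
      congr 1
      field_simp
    rw [this]
    have h4 : |‖w‖ - ‖v‖| ≤ ‖v - w‖ := by
      rw [abs_sub_comm]
      exact (abs_norm_sub_norm_le v w)
    rw [div_mul_eq_mul_div]
    rw [div_le_iff₀ (by positivity)]
    have : ‖v‖⁻¹ * ‖v - w‖ * (‖v‖ * ‖w‖) = ‖v - w‖ * ‖w‖ := by field_simp
    rw [this]
    exact mul_le_mul_of_nonneg_right h4 hw0.le
  calc ‖‖v‖⁻¹ • (v - w) + (‖v‖⁻¹ - ‖w‖⁻¹) • w‖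
      ≤ ‖‖v‖⁻¹ • (v - w)‖ + ‖(‖v‖⁻¹ - ‖w‖⁻¹) • w‖ := norm_add_le _ _
    _ ≤ ‖v‖⁻¹ * ‖v - w‖ + ‖v‖⁻¹ * ‖v - w‖ := by rw [h1, h2]; exact add_le_add le_rfl h3
    _ = 2 * ‖v‖⁻¹ * ‖v - w‖ := by ring
    _ ≤ (2 / ρ) * ‖v - w‖ := by
        apply mul_le_mul_of_nonneg_right _ (norm_nonneg _)
        rw [div_eq_mul_inv]
        exact mul_le_mul_of_nonneg_left (inv_anti₀ hρ hv) (by norm_num)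

def goodChain {E : Type*} [NormedAddCommGroup E] (G : Set E) (r : ℝ) (d : ℕ) (z : ℕ → E) : Prop :=
  (∀ i < d, z i ∈ G) ∧ ∀ i, i + 1 < d → ‖z i - z (i + 1)‖ ≤ r

lemma goodChain_concat {E : Type*} [NormedAddCommGroup E] {G : Set E} {r : ℝ} {d₁ d₂ : ℕ}
    {z w : ℕ → E} (h₁ : goodChain G r d₁ z) (h₂ : goodChain G r d₂ w)
    (hd₁ : 1 ≤ d₁) (hd₂ : 1 ≤ d₂) (hglue : z (d₁ - 1) = w 0) :
    ∃ ζ, goodChain G r (d₁ + d₂ - 1) ζ ∧ ζ 0 = z 0 ∧ ζ (d₁ + d₂ - 1 - 1) = w (d₂ - 1) := by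
  refine ⟨fun i => if i + 1 ≤ d₁ then z i else w (i + 1 - d₁), ⟨?_, ?_⟩, ?_, ?_⟩
  · intro i hi
    by_cases h : i + 1 ≤ d₁
    · simp only [h, if_pos]
      exact h₁.1 i (by omega)
    · simp only [h, if_neg, if_false]
      exact h₂.1 _ (by omega)
  · intro i hi
    by_cases h : i + 2 ≤ d₁
    · simp only [show i + 1 ≤ d₁ by omega, if_pos, show i + 1 + 1 ≤ d₁ from h]
      exact h₁.2 i (by omega)
    · by_cases h' : i + 1 ≤ d₁
      · -- i + 1 = d₁
        have hi1 : i = d₁ - 1 := by omega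
        simp only [h', if_pos, show ¬ (i + 1 + 1 ≤ d₁) by omega, if_neg, if_false]
        have h2' : i + 1 + 1 - d₁ = 1 := by omega
        rw [h2', hi1, hglue]
        exact h₂.2 0 (by omega)
      · simp only [h', show ¬ (i + 1 + 1 ≤ d₁) by omega, if_neg, if_false]
        have e1 : i + 1 + 1 - d₁ = (i + 1 - d₁) + 1 := by omega
        rw [e1]
        exact h₂.2 _ (by omega)
  · simp [hd₁]
  · by_cases h : d₂ = 1
    · subst h
      simp only [show d₁ + 1 - 1 - 1 + 1 ≤ d₁ by omega, if_pos]
      simpa using hglue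
    · have : ¬ (d₁ + d₂ - 1 - 1 + 1 ≤ d₁) := by omega
      simp only [this, if_neg, if_false]
      congr 1
      omega

lemma goodChain_of_lipschitz {E : Type*} [NormedAddCommGroup E] (G : Set E) (p : ℝ → E)
    (L r : ℝ) (hr : 0 < r) (hL : 0 ≤ L)
    (hmem : ∀ t ∈ Icc (0:ℝ) 1, p t ∈ G)
    (hlip : ∀ s ∈ Icc (0:ℝ) 1, ∀ t ∈ Icc (0:ℝ) 1, ‖p s - p t‖ ≤ L * |s - t|) :
    ∃ d z, goodChain G r d z ∧ 1 ≤ d ∧ (d : ℝ) ≤ L / r + 3 ∧ z 0 = p 0 ∧ z (d - 1) = p 1 := by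
  set N : ℕ := ⌈L / r⌉₊ + 1 with hN
  have hN0 : (0:ℝ) < N := by positivity
  have hmm : ∀ i : ℕ, ((min i N : ℕ) : ℝ) / N ∈ Icc (0:ℝ) 1 := by
    intro i
    constructor
    · positivity
    · rw [div_le_one hN0]
      have : (min i N : ℕ) ≤ N := min_le_right _ _
      exact_mod_cast this
  refine ⟨N + 1, fun i => p ((min i N : ℕ) / N), ⟨?_, ?_⟩, by omega, ?_, ?_, ?_⟩
  · intro i _; exact hmem _ (hmm i)
  · intro i hi
    dsimp only
    have h1 : min i N = i := by omega
    have h2 : min (i+1) N = i + 1 := by omega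
    rw [h1, h2]
    calc ‖p (i / N) - p ((i+1 : ℕ) / N)‖ ≤ L * |(i:ℝ)/N - ((i+1:ℕ):ℝ)/N| :=
          hlip _ (by rw [← h1]; exact hmm i) _ (by rw [← h2]; exact hmm (i+1))
      _ = L / N := by
          have h5 : ((i:ℝ))/N - ((i+1:ℕ):ℝ)/N = -(1/N) := by
            push_cast
            field_simp
            ring
          rw [h5, abs_neg, abs_of_pos (by positivity)]
          ring
      _ ≤ r := by
          rw [div_le_iff₀ hN0]
          have h3 : L / r ≤ (N:ℝ) := le_trans (Nat.le_ceil _) (by exact_mod_cast Nat.le_succ _)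
          calc L = (L / r) * r := by field_simp
            _ ≤ (N:ℝ) * r := mul_le_mul_of_nonneg_right h3 hr.le
            _ = r * N := by ring
  · rw [hN]
    push_cast
    have := Nat.ceil_lt_add_one (show (0:ℝ) ≤ L / r by positivity)
    linarith
  · have h0 : min 0 N = 0 := by omega
    dsimp only
    simp [h0]
  · have h1 : min (N + 1 - 1) N = N := by omega
    dsimp only
    rw [h1, div_self hN0.ne']

lemma exists_orth {n : ℕ} (hn : 2 ≤ n) (a b : EuclideanSpace ℝ (Fin n))
    (ha : ‖a‖ = 1) (hb : ‖b‖ = 1) :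
    ∃ e : EuclideanSpace ℝ (Fin n),
      ‖e‖ = 1 ∧ (inner ℝ a e : ℝ) = 0 ∧ (0:ℝ) ≤ (inner ℝ b e : ℝ) := by
  have ha0 : a ≠ 0 := by intro h; rw [h, norm_zero] at ha; norm_num at ha
  by_cases hb' : b - (inner ℝ a b : ℝ) • a = 0
  · -- b is parallel to a; pick any unit vector orthogonal to a
    have hne : ((ℝ ∙ a)ᗮ : Submodule ℝ (EuclideanSpace ℝ (Fin n))) ≠ ⊥ := by
      intro h
      have htop : (ℝ ∙ a) = ⊤ := Submodule.orthogonal_eq_bot_iff.mp h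
      have h1 : Module.finrank ℝ (ℝ ∙ a) = 1 := finrank_span_singleton ha0
      have h2 : Module.finrank ℝ (EuclideanSpace ℝ (Fin n)) = n := finrank_euclideanSpace_fin
      rw [htop, finrank_top, h2] at h1
      omega
    obtain ⟨v, hv, hv0⟩ := Submodule.exists_mem_ne_zero_of_ne_bot hne
    have hav : (inner ℝ a v : ℝ) = 0 :=
      Submodule.mem_orthogonal_singleton_iff_inner_right.mp hv
    refine ⟨‖v‖⁻¹ • v, norm_smul_inv_norm hv0, ?_, ?_⟩
    · rw [real_inner_smul_right, hav]; ring
    · have hba : b = (inner ℝ a b : ℝ) • a := by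
        exact sub_eq_zero.mp hb'
      rw [hba, real_inner_smul_left, real_inner_smul_right, hav]
      ring_nf
      exact le_rfl
  · set b' := b - (inner ℝ a b : ℝ) • a with hb'def
    have hab' : (inner ℝ a b' : ℝ) = 0 := by
      rw [hb'def, inner_sub_right, real_inner_smul_right, real_inner_self_eq_norm_sq, ha]
      ring
    have hbb' : (0:ℝ) ≤ inner ℝ b b' := by
      rw [hb'def, inner_sub_right, real_inner_smul_right, real_inner_self_eq_norm_sq, hb]
      have h1 : |(inner ℝ a b : ℝ)| ≤ 1 := by
        have := abs_real_inner_le_norm a b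
        rwa [ha, hb, one_mul] at this
      have h2 : (inner ℝ b a : ℝ) = inner ℝ a b := real_inner_comm _ _
      rw [h2]
      nlinarith [abs_le.mp h1]
    refine ⟨‖b'‖⁻¹ • b', norm_smul_inv_norm hb', ?_, ?_⟩
    · rw [real_inner_smul_right, hab']; ring
    · rw [real_inner_smul_right]
      positivity

lemma overlap_volume {n : ℕ} (hn : 2 ≤ n) (r₀ : ℝ) (hr₀ : 0 < r₀)
    {u v : EuclideanSpace ℝ (Fin n)} (h : ‖u - v‖ ≤ r₀) :
    ENNReal.ofReal (((volume (ball (0 : EuclideanSpace ℝ (Fin n)) 1)).toReal / 2 ^ n) * r₀ ^ n)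
      ≤ volume (ball u r₀ ∩ ball v r₀) := by
  haveI : Nontrivial (EuclideanSpace ℝ (Fin n)) :=
    Module.nontrivial_of_finrank_pos (R := ℝ)
      (by rw [finrank_euclideanSpace_fin]; omega)
  set mid := (2:ℝ)⁻¹ • (u + v) with hmid
  have hdu : dist mid u ≤ r₀ / 2 := by
    rw [dist_eq_norm]
    have : mid - u = (2:ℝ)⁻¹ • (v - u) := by
      rw [hmid]; rw [smul_sub, smul_add]
      module
    rw [this, norm_smul]
    simp only [norm_inv, Real.norm_ofNat]
    rw [norm_sub_rev]
    linarith
  have hdv : dist mid v ≤ r₀ / 2 := by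
    rw [dist_eq_norm]
    have : mid - v = (2:ℝ)⁻¹ • (u - v) := by
      rw [hmid]; rw [smul_sub, smul_add]
      module
    rw [this, norm_smul]
    simp only [norm_inv, Real.norm_ofNat]
    linarith
  have hsub : ball mid (r₀ / 2) ⊆ ball u r₀ ∩ ball v r₀ := by
    intro w hw
    rw [mem_ball] at hw
    constructor
    · rw [mem_ball]
      calc dist w u ≤ dist w mid + dist mid u := dist_triangle _ _ _
        _ < r₀ / 2 + r₀ / 2 := by exact add_lt_add_of_lt_of_le hw hdu
        _ = r₀ := by ring
    · rw [mem_ball]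
      calc dist w v ≤ dist w mid + dist mid v := dist_triangle _ _ _
        _ < r₀ / 2 + r₀ / 2 := by exact add_lt_add_of_lt_of_le hw hdv
        _ = r₀ := by ring
  have hball : volume (ball mid (r₀ / 2)) =
      ENNReal.ofReal ((r₀ / 2) ^ n) * volume (ball (0 : EuclideanSpace ℝ (Fin n)) 1) := by
    rw [Measure.addHaar_ball volume mid (by positivity : (0:ℝ) ≤ r₀ / 2)]
    rw [finrank_euclideanSpace_fin]
  have hfin : volume (ball (0 : EuclideanSpace ℝ (Fin n)) 1) ≠ ⊤ :=
    (measure_ball_lt_top).ne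
  calc ENNReal.ofReal (((volume (ball (0:EuclideanSpace ℝ (Fin n)) 1)).toReal / 2 ^ n) * r₀ ^ n)
      = ENNReal.ofReal ((r₀ / 2) ^ n *
          (volume (ball (0:EuclideanSpace ℝ (Fin n)) 1)).toReal) := by
        congr 1
        rw [div_pow]
        ring
    _ = ENNReal.ofReal ((r₀ / 2) ^ n) * volume (ball (0:EuclideanSpace ℝ (Fin n)) 1) := by
        rw [ENNReal.ofReal_mul (by positivity), ENNReal.ofReal_toReal hfin]
    _ = volume (ball mid (r₀ / 2)) := hball.symm
    _ ≤ volume (ball u r₀ ∩ ball v r₀) := measure_mono hsub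

lemma norm_comb_sq {E : Type*} [NormedAddCommGroup E] [InnerProductSpace ℝ E]
    {a e : E} (ha : ‖a‖ = 1) (he : ‖e‖ = 1) (t : ℝ) :
    ‖(1 - t) • a + t • e‖ ^ 2 = (1 - t) ^ 2 + t ^ 2 + 2 * ((1 - t) * t) * (inner ℝ a e : ℝ) := by
  rw [norm_add_sq_real, real_inner_smul_left, real_inner_smul_right,
    norm_smul, norm_smul, ha, he]
  simp only [Real.norm_eq_abs, mul_one, mul_pow, sq_abs]
  ring

lemma half_le_of_sq {q : ℝ} (hq0 : 0 ≤ q) (h : (1:ℝ)/4 ≤ q ^ 2) : (1:ℝ)/2 ≤ q := by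
  nlinarith

noncomputable section


set_option maxHeartbeats 1600000 in
/-- Harnack chains of overlapping balls in an annulus. -/
theorem harnack_chain_annulus (n : ℕ) (hn : 2 ≤ n) :
    ∃ C c : ℝ, 0 < C ∧ 0 < c ∧
      ∀ R : ℝ, 2 < R → ∀ r₀ : ℝ, 0 < r₀ → r₀ ≤ 1 →
      ∀ x y : EuclideanSpace ℝ (Fin n),
        x ∈ {w : EuclideanSpace ℝ (Fin n) | 2 < ‖w‖ ∧ ‖w‖ < R} →
        y ∈ {w : EuclideanSpace ℝ (Fin n) | 2 < ‖w‖ ∧ ‖w‖ < R} →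
        ∃ d : ℕ, 1 ≤ d ∧ (d : ℝ) ≤ C * R / r₀ ∧
          ∃ z : ℕ → EuclideanSpace ℝ (Fin n), z 0 = x ∧ z (d - 1) = y ∧
            (∀ i < d, Metric.infDist (z i)
              {w : EuclideanSpace ℝ (Fin n) | 2 < ‖w‖ ∧ ‖w‖ < R} < r₀) ∧
            ∀ i : ℕ, i + 1 < d →
              ENNReal.ofReal (c * r₀ ^ n) ≤
                volume (ball (z i) r₀ ∩ ball (z (i + 1)) r₀) := by
  haveI : Nontrivial (EuclideanSpace ℝ (Fin n)) :=
    Module.nontrivial_of_finrank_pos (R := ℝ)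
      (by rw [finrank_euclideanSpace_fin]; omega)
  have hvolfin : volume (ball (0 : EuclideanSpace ℝ (Fin n)) 1) ≠ ⊤ :=
    (measure_ball_lt_top).ne
  have hvolpos : 0 < (volume (ball (0 : EuclideanSpace ℝ (Fin n)) 1)).toReal :=
    ENNReal.toReal_pos (measure_ball_pos volume 0 one_pos).ne' hvolfin
  refine ⟨40, (volume (ball (0 : EuclideanSpace ℝ (Fin n)) 1)).toReal / 2 ^ n,
    by norm_num, by positivity, ?_⟩
  intro R hR r₀ hr₀ hr₀1 x y hx hy
  set G := {w : EuclideanSpace ℝ (Fin n) | 2 < ‖w‖ ∧ ‖w‖ < R} with hG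
  obtain ⟨hx2, hxR⟩ := hx
  obtain ⟨hy2, hyR⟩ := hy
  have hx0 : x ≠ 0 := by intro h; rw [h, norm_zero] at hx2; norm_num at hx2
  have hy0 : y ≠ 0 := by intro h; rw [h, norm_zero] at hy2; norm_num at hy2
  have hxn0 : ‖x‖ ≠ 0 := by positivity
  have hyn0 : ‖y‖ ≠ 0 := by positivity
  set a := ‖x‖⁻¹ • x with hadef
  set b := ‖y‖⁻¹ • y with hbdef
  have ha : ‖a‖ = 1 := norm_smul_inv_norm hx0
  have hb : ‖b‖ = 1 := norm_smul_inv_norm hy0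
  obtain ⟨e, he, hae, hbe⟩ := exists_orth hn a b ha hb
  set m : ℝ := (2 + R) / 2 with hmdef
  have hm2 : 2 < m := by rw [hmdef]; linarith
  have hmR : m < R := by rw [hmdef]; linarith
  have hm0 : (0:ℝ) < m := by linarith
  have hR0 : (0:ℝ) < R := by linarith
  have hL0 : (0:ℝ) ≤ 8 * R := by linarith
  -- ===== Piece 1 : radial from x to m • a =====
  have hp₁mem : ∀ t ∈ Icc (0:ℝ) 1, ((1 - t) * ‖x‖ + t * m) • a ∈ G := by
    intro t ⟨ht0, ht1⟩
    have hval1 : 2 < (1 - t) * ‖x‖ + t * m := by nlinarith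
    have hval2 : (1 - t) * ‖x‖ + t * m < R := by nlinarith
    have hnrm : ‖((1 - t) * ‖x‖ + t * m) • a‖ = (1 - t) * ‖x‖ + t * m := by
      rw [norm_smul, ha, mul_one, Real.norm_eq_abs, abs_of_pos (by linarith)]
    exact ⟨by rw [hnrm]; exact hval1, by rw [hnrm]; exact hval2⟩
  have hp₁lip : ∀ s ∈ Icc (0:ℝ) 1, ∀ t ∈ Icc (0:ℝ) 1,
      ‖((1 - s) * ‖x‖ + s * m) • a - ((1 - t) * ‖x‖ + t * m) • a‖ ≤ (8 * R) * |s - t| := by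
    intro s _ t _
    rw [← sub_smul, norm_smul, ha, mul_one, Real.norm_eq_abs,
      show (1 - s) * ‖x‖ + s * m - ((1 - t) * ‖x‖ + t * m) = (s - t) * (m - ‖x‖) by ring,
      abs_mul]
    have h1 : |m - ‖x‖| ≤ 8 * R := by
      rw [abs_le]; constructor <;> nlinarith
    calc |s - t| * |m - ‖x‖| ≤ |s - t| * (8 * R) :=
          mul_le_mul_of_nonneg_left h1 (abs_nonneg _)
      _ = (8 * R) * |s - t| := by ring
  obtain ⟨d₁, z₁, hc₁, hd₁, hd₁le, hz₁0, hz₁e⟩ :=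
    goodChain_of_lipschitz G (fun t => ((1 - t) * ‖x‖ + t * m) • a) (8 * R) r₀ hr₀ hL0
      hp₁mem hp₁lip
  -- ===== Piece 2 : great circle from a to e =====
  have hfsq : ∀ t : ℝ, ‖(1 - t) • a + t • e‖ ^ 2 = (1 - t) ^ 2 + t ^ 2 := by
    intro t
    rw [norm_comb_sq ha he t, hae]
    ring
  have hflb : ∀ t : ℝ, (1:ℝ)/2 ≤ ‖(1 - t) • a + t • e‖ := by
    intro t
    apply half_le_of_sq (norm_nonneg _)
    rw [hfsq t, show (1 - t) ^ 2 + t ^ 2 = (2 * t - 1) ^ 2 / 2 + 1 / 2 by ring]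
    linarith [sq_nonneg (2 * t - 1)]
  have hp₂mem : ∀ t ∈ Icc (0:ℝ) 1,
      m • (‖(1 - t) • a + t • e‖⁻¹ • ((1 - t) • a + t • e)) ∈ G := by
    intro t _
    have hft0 : ‖(1 - t) • a + t • e‖ ≠ 0 := by have := hflb t; positivity
    have hnrm : ‖m • (‖(1 - t) • a + t • e‖⁻¹ • ((1 - t) • a + t • e))‖ = m := by
      rw [norm_smul, norm_smul, Real.norm_eq_abs, abs_of_pos hm0, norm_inv,
        Real.norm_eq_abs, abs_of_nonneg (norm_nonneg _), inv_mul_cancel₀ hft0, mul_one]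
    exact ⟨by rw [hnrm]; exact hm2, by rw [hnrm]; exact hmR⟩
  have hp₂lip : ∀ s ∈ Icc (0:ℝ) 1, ∀ t ∈ Icc (0:ℝ) 1,
      ‖m • (‖(1 - s) • a + s • e‖⁻¹ • ((1 - s) • a + s • e)) -
        m • (‖(1 - t) • a + t • e‖⁻¹ • ((1 - t) • a + t • e))‖ ≤ (8 * R) * |s - t| := by
    intro s _ t _
    rw [← smul_sub, norm_smul, Real.norm_eq_abs, abs_of_pos hm0]
    have hfd : ((1 - s) • a + s • e) - ((1 - t) • a + t • e) = (t - s) • (a - e) := by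
      module
    have hfdn : ‖((1 - s) • a + s • e) - ((1 - t) • a + t • e)‖ ≤ 2 * |s - t| := by
      rw [hfd, norm_smul, Real.norm_eq_abs, abs_sub_comm]
      have h2 : ‖a - e‖ ≤ 2 := by
        calc ‖a - e‖ ≤ ‖a‖ + ‖e‖ := norm_sub_le _ _
          _ = 2 := by rw [ha, he]; norm_num
      calc |s - t| * ‖a - e‖ ≤ |s - t| * 2 := mul_le_mul_of_nonneg_left h2 (abs_nonneg _)
        _ = 2 * |s - t| := by ring
    have hnl := normalize_lip (by norm_num : (0:ℝ) < 1/2) (hflb s) (hflb t)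
    calc m * ‖‖(1 - s) • a + s • e‖⁻¹ • ((1 - s) • a + s • e) -
            ‖(1 - t) • a + t • e‖⁻¹ • ((1 - t) • a + t • e)‖
        ≤ m * ((2 / (1/2)) * ‖((1 - s) • a + s • e) - ((1 - t) • a + t • e)‖) :=
          mul_le_mul_of_nonneg_left hnl hm0.le
      _ = 4 * m * ‖((1 - s) • a + s • e) - ((1 - t) • a + t • e)‖ := by ring
      _ ≤ 4 * m * (2 * |s - t|) := mul_le_mul_of_nonneg_left hfdn (by positivity)
      _ ≤ (8 * R) * |s - t| := by nlinarith [abs_nonneg (s - t)]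
  obtain ⟨d₂, z₂, hc₂, hd₂, hd₂le, hz₂0, hz₂e⟩ :=
    goodChain_of_lipschitz G
      (fun t => m • (‖(1 - t) • a + t • e‖⁻¹ • ((1 - t) • a + t • e))) (8 * R) r₀ hr₀ hL0
      hp₂mem hp₂lip
  -- ===== Piece 3 : great circle from e to b =====
  have heb : (0:ℝ) ≤ (inner ℝ e b : ℝ) := by rw [real_inner_comm]; exact hbe
  have hgsq : ∀ t : ℝ, ‖(1 - t) • e + t • b‖ ^ 2 =
      (1 - t) ^ 2 + t ^ 2 + 2 * ((1 - t) * t) * (inner ℝ e b : ℝ) :=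
    fun t => norm_comb_sq he hb t
  have hglb : ∀ t ∈ Icc (0:ℝ) 1, (1:ℝ)/2 ≤ ‖(1 - t) • e + t • b‖ := by
    intro t ⟨ht0, ht1⟩
    have hnn : 0 ≤ 2 * ((1 - t) * t) * (inner ℝ e b : ℝ) := by
      have h1t : 0 ≤ (1 - t) * t := by nlinarith
      have := heb
      nlinarith
    apply half_le_of_sq (norm_nonneg _)
    rw [hgsq t, show (1 - t) ^ 2 + t ^ 2 + 2 * ((1 - t) * t) * (inner ℝ e b : ℝ)
      = (2 * t - 1) ^ 2 / 2 + 1 / 2 + 2 * ((1 - t) * t) * (inner ℝ e b : ℝ) by ring]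
    linarith [sq_nonneg (2 * t - 1), hnn]
  have hp₃mem : ∀ t ∈ Icc (0:ℝ) 1,
      m • (‖(1 - t) • e + t • b‖⁻¹ • ((1 - t) • e + t • b)) ∈ G := by
    intro t ht
    have hgt0 : ‖(1 - t) • e + t • b‖ ≠ 0 := by have := hglb t ht; positivity
    have hnrm : ‖m • (‖(1 - t) • e + t • b‖⁻¹ • ((1 - t) • e + t • b))‖ = m := by
      rw [norm_smul, norm_smul, Real.norm_eq_abs, abs_of_pos hm0, norm_inv,
        Real.norm_eq_abs, abs_of_nonneg (norm_nonneg _), inv_mul_cancel₀ hgt0, mul_one]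
    exact ⟨by rw [hnrm]; exact hm2, by rw [hnrm]; exact hmR⟩
  have hp₃lip : ∀ s ∈ Icc (0:ℝ) 1, ∀ t ∈ Icc (0:ℝ) 1,
      ‖m • (‖(1 - s) • e + s • b‖⁻¹ • ((1 - s) • e + s • b)) -
        m • (‖(1 - t) • e + t • b‖⁻¹ • ((1 - t) • e + t • b))‖ ≤ (8 * R) * |s - t| := by
    intro s hs t ht
    rw [← smul_sub, norm_smul, Real.norm_eq_abs, abs_of_pos hm0]
    have hfd : ((1 - s) • e + s • b) - ((1 - t) • e + t • b) = (t - s) • (e - b) := by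
      module
    have hfdn : ‖((1 - s) • e + s • b) - ((1 - t) • e + t • b)‖ ≤ 2 * |s - t| := by
      rw [hfd, norm_smul, Real.norm_eq_abs, abs_sub_comm]
      have h2 : ‖e - b‖ ≤ 2 := by
        calc ‖e - b‖ ≤ ‖e‖ + ‖b‖ := norm_sub_le _ _
          _ = 2 := by rw [he, hb]; norm_num
      calc |s - t| * ‖e - b‖ ≤ |s - t| * 2 := mul_le_mul_of_nonneg_left h2 (abs_nonneg _)
        _ = 2 * |s - t| := by ring
    have hnl := normalize_lip (by norm_num : (0:ℝ) < 1/2) (hglb s hs) (hglb t ht)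
    calc m * ‖‖(1 - s) • e + s • b‖⁻¹ • ((1 - s) • e + s • b) -
            ‖(1 - t) • e + t • b‖⁻¹ • ((1 - t) • e + t • b)‖
        ≤ m * ((2 / (1/2)) * ‖((1 - s) • e + s • b) - ((1 - t) • e + t • b)‖) :=
          mul_le_mul_of_nonneg_left hnl hm0.le
      _ = 4 * m * ‖((1 - s) • e + s • b) - ((1 - t) • e + t • b)‖ := by ring
      _ ≤ 4 * m * (2 * |s - t|) := mul_le_mul_of_nonneg_left hfdn (by positivity)
      _ ≤ (8 * R) * |s - t| := by nlinarith [abs_nonneg (s - t)]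
  obtain ⟨d₃, z₃, hc₃, hd₃, hd₃le, hz₃0, hz₃e⟩ :=
    goodChain_of_lipschitz G
      (fun t => m • (‖(1 - t) • e + t • b‖⁻¹ • ((1 - t) • e + t • b))) (8 * R) r₀ hr₀ hL0
      hp₃mem hp₃lip
  -- ===== Piece 4 : radial from m • b to y =====
  have hp₄mem : ∀ t ∈ Icc (0:ℝ) 1, ((1 - t) * m + t * ‖y‖) • b ∈ G := by
    intro t ⟨ht0, ht1⟩
    have hval1 : 2 < (1 - t) * m + t * ‖y‖ := by nlinarith
    have hval2 : (1 - t) * m + t * ‖y‖ < R := by nlinarith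
    have hnrm : ‖((1 - t) * m + t * ‖y‖) • b‖ = (1 - t) * m + t * ‖y‖ := by
      rw [norm_smul, hb, mul_one, Real.norm_eq_abs, abs_of_pos (by linarith)]
    exact ⟨by rw [hnrm]; exact hval1, by rw [hnrm]; exact hval2⟩
  have hp₄lip : ∀ s ∈ Icc (0:ℝ) 1, ∀ t ∈ Icc (0:ℝ) 1,
      ‖((1 - s) * m + s * ‖y‖) • b - ((1 - t) * m + t * ‖y‖) • b‖ ≤ (8 * R) * |s - t| := by
    intro s _ t _
    rw [← sub_smul, norm_smul, hb, mul_one, Real.norm_eq_abs,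
      show (1 - s) * m + s * ‖y‖ - ((1 - t) * m + t * ‖y‖) = (s - t) * (‖y‖ - m) by ring,
      abs_mul]
    have h1 : |‖y‖ - m| ≤ 8 * R := by
      rw [abs_le]; constructor <;> nlinarith
    calc |s - t| * |‖y‖ - m| ≤ |s - t| * (8 * R) :=
          mul_le_mul_of_nonneg_left h1 (abs_nonneg _)
      _ = (8 * R) * |s - t| := by ring
  obtain ⟨d₄, z₄, hc₄, hd₄, hd₄le, hz₄0, hz₄e⟩ :=
    goodChain_of_lipschitz G (fun t => ((1 - t) * m + t * ‖y‖) • b) (8 * R) r₀ hr₀ hL0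
      hp₄mem hp₄lip
  -- ===== Endpoint values =====
  have hz₁0' : z₁ 0 = x := by
    rw [hz₁0]
    show ((1 - 0) * ‖x‖ + 0 * m) • a = x
    rw [hadef, smul_smul]
    rw [show ((1:ℝ) - 0) * ‖x‖ + 0 * m = ‖x‖ by ring, mul_inv_cancel₀ hxn0, one_smul]
  have hz₁e' : z₁ (d₁ - 1) = m • a := by
    rw [hz₁e]
    show ((1 - 1) * ‖x‖ + 1 * m) • a = m • a
    norm_num
  have hz₂0' : z₂ 0 = m • a := by
    rw [hz₂0]
    show m • (‖(1 - 0) • a + (0:ℝ) • e‖⁻¹ • ((1 - 0) • a + (0:ℝ) • e)) = m • a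
    rw [show ((1:ℝ) - 0) • a + (0:ℝ) • e = a by rw [zero_smul, add_zero, sub_zero, one_smul],
      ha]
    norm_num
  have hz₂e' : z₂ (d₂ - 1) = m • e := by
    rw [hz₂e]
    show m • (‖(1 - 1) • a + (1:ℝ) • e‖⁻¹ • ((1 - 1) • a + (1:ℝ) • e)) = m • e
    rw [show ((1:ℝ) - 1) • a + (1:ℝ) • e = e by rw [sub_self, zero_smul, zero_add, one_smul],
      he]
    norm_num
  have hz₃0' : z₃ 0 = m • e := by
    rw [hz₃0]
    show m • (‖(1 - 0) • e + (0:ℝ) • b‖⁻¹ • ((1 - 0) • e + (0:ℝ) • b)) = m • e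
    rw [show ((1:ℝ) - 0) • e + (0:ℝ) • b = e by rw [zero_smul, add_zero, sub_zero, one_smul],
      he]
    norm_num
  have hz₃e' : z₃ (d₃ - 1) = m • b := by
    rw [hz₃e]
    show m • (‖(1 - 1) • e + (1:ℝ) • b‖⁻¹ • ((1 - 1) • e + (1:ℝ) • b)) = m • b
    rw [show ((1:ℝ) - 1) • e + (1:ℝ) • b = b by rw [sub_self, zero_smul, zero_add, one_smul],
      hb]
    norm_num
  have hz₄0' : z₄ 0 = m • b := by
    rw [hz₄0]
    show ((1 - 0) * m + 0 * ‖y‖) • b = m • b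
    norm_num
  have hz₄e' : z₄ (d₄ - 1) = y := by
    rw [hz₄e]
    show ((1 - 1) * m + 1 * ‖y‖) • b = y
    rw [hbdef, smul_smul]
    rw [show ((1:ℝ) - 1) * m + 1 * ‖y‖ = ‖y‖ by ring, mul_inv_cancel₀ hyn0, one_smul]
  -- ===== Concatenate =====
  obtain ⟨ζ₁, hcζ₁, hζ₁0, hζ₁e⟩ :=
    goodChain_concat hc₁ hc₂ hd₁ hd₂ (by rw [hz₁e', hz₂0'])
  obtain ⟨ζ₂, hcζ₂, hζ₂0, hζ₂e⟩ :=
    goodChain_concat hcζ₁ hc₃ (by omega) hd₃ (by rw [hζ₁e, hz₂e', hz₃0'])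
  obtain ⟨ζ₃, hcζ₃, hζ₃0, hζ₃e⟩ :=
    goodChain_concat hcζ₂ hc₄ (by omega) hd₄ (by rw [hζ₂e, hz₃e', hz₄0'])
  set dt : ℕ := d₁ + d₂ - 1 + d₃ - 1 + d₄ - 1 with hdt
  have hdteq : d₁ + d₂ - 1 + d₃ - 1 + d₄ - 1 = dt := rfl
  refine ⟨dt, by omega, ?_, ζ₃, ?_, ?_, ?_, ?_⟩
  · -- count bound
    have hsum : (dt : ℝ) ≤ (d₁ : ℝ) + d₂ + d₃ + d₄ := by
      have : dt ≤ d₁ + d₂ + d₃ + d₄ := by omega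
      exact_mod_cast this
    have hRr : 2 ≤ R / r₀ := by
      rw [le_div_iff₀ hr₀]
      nlinarith
    have h8 : 8 * R / r₀ + 3 ≤ (8 * R) / r₀ + 3 := le_rfl
    have hone : (8 * R) / r₀ = 8 * (R / r₀) := by ring
    calc (dt : ℝ) ≤ (d₁ : ℝ) + d₂ + d₃ + d₄ := hsum
      _ ≤ ((8 * R) / r₀ + 3) + ((8 * R) / r₀ + 3) + ((8 * R) / r₀ + 3) + ((8 * R) / r₀ + 3) := by
          linarith [hd₁le, hd₂le, hd₃le, hd₄le]
      _ = 32 * (R / r₀) + 12 := by rw [hone]; ring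
      _ ≤ 32 * (R / r₀) + 6 * (R / r₀) := by linarith
      _ ≤ 40 * (R / r₀) := by nlinarith
      _ = 40 * R / r₀ := by ring
  · rw [hζ₃0, hζ₂0, hζ₁0, hz₁0']
  · rw [show dt - 1 = d₁ + d₂ - 1 + d₃ - 1 + d₄ - 1 - 1 by omega, hζ₃e, hz₄e']
  · intro i hi
    have hmem := hcζ₃.1 i (by omega)
    have : Metric.infDist (ζ₃ i) G = 0 := Metric.infDist_zero_of_mem hmem
    rw [this]
    exact hr₀
  · intro i hi
    have hstep := hcζ₃.2 i (by omega)
    exact overlap_volume hn r₀ hr₀ hstep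
end
end
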